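/- arXiv:1003.1422 — 2 statements merged into one kernel-verified Lean document; each statement's English description precedes it below -/
import Mathlib

section
/- Let W be a B-DMC, N = 2^n, ℱ ⊆ {1,…,N} a frozen set and 𝒜 = ℱ^c. Let U₁^N be uniformly distributed on {0,1}^N and let Y₁^N be generated from U₁^N through the combined channel W_N. Then the block error probability of the successive cancellation decoder (equivalently, the block error probability of the polar code averaged over uniformly random choices of the frozen vector u_ℱ and uniformly random message bits u_𝒜) satisfies P(Û_𝒜 ≠ U_𝒜) ≤ Σ_{i∈𝒜} Z(W_N^{(i)}). -/
open scoped BigOperators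

/-- A binary-input discrete memoryless channel (B-DMC). -/
def IsBDMC {Y : Type*} [Fintype Y] (W : ZMod 2 → Y → ℝ) : Prop :=
  (∀ x y, 0 ≤ W x y) ∧ ∀ x, ∑ y, W x y = 1

/-- Bhattacharyya parameter `Z(W)`. -/
noncomputable def bhatt {Y : Type*} [Fintype Y] (W : ZMod 2 → Y → ℝ) : ℝ :=
  ∑ y, Real.sqrt (W 0 y * W 1 y)

/-- Symmetric capacity `I(W)` (in bits); terms with `W x y = 0` contribute `0`
thanks to the convention `Real.log 0 = 0` and the multiplicative factor `W x y`. -/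
noncomputable def symCap {Y : Type*} [Fintype Y] (W : ZMod 2 → Y → ℝ) : ℝ :=
  ∑ x : ZMod 2, ∑ y, (1 / 2) * W x y *
    Real.logb 2 (W x y / ((1 / 2) * W 0 y + (1 / 2) * W 1 y))

/-- The bit-reversal permutation on `Fin (2^n)`. -/
def bitRev (n : ℕ) (i : Fin (2 ^ n)) : Fin (2 ^ n) :=
  ⟨(∑ k ∈ Finset.range n, if Nat.testBit i.val k then 2 ^ (n - 1 - k) else 0) % 2 ^ n,
    Nat.mod_lt _ (Nat.pow_pos (by norm_num))⟩

/-- The generator matrix `B_N F^{⊗n}` over `𝔽₂`, where `F = [[1,0],[1,1]]`: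
the `(i,j)` entry of `F^{⊗n}` is `1` iff every binary digit of `j` is dominated by the
corresponding digit of `i`, and `B_N` acts by bit reversal on the row index. -/
def polarGen (n : ℕ) : Matrix (Fin (2 ^ n)) (Fin (2 ^ n)) (ZMod 2) :=
  fun i j =>
    if ∀ k < n, j.val.testBit k = true → (bitRev n i).val.testBit k = true then 1 else 0

/-- The polar encoding `x = u · B_N F^{⊗n}` over `𝔽₂`. -/
def polarEnc (n : ℕ) (u : Fin (2 ^ n) → ZMod 2) : Fin (2 ^ n) → ZMod 2 :=
  fun j => ∑ i, u i * polarGen n i j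

/-- The combined channel `W_N(y₁^N | u₁^N) = Π_i W(y_i | x_i)`, `x = u·B_N F^{⊗n}`. -/
noncomputable def combinedCh {Y : Type*} [Fintype Y] (n : ℕ) (W : ZMod 2 → Y → ℝ)
    (u : Fin (2 ^ n) → ZMod 2) (y : Fin (2 ^ n) → Y) : ℝ :=
  ∏ i, W (polarEnc n u i) (y i)

/-- The split channel `W_N^{(i)}(y₁^N, u₁^{i-1} | u_i)`; it is a B-DMC with input
`u_i` and output `(y₁^N, u₁^{i-1})`.  (Indices are `0`-based: the channel `W_N^{(i)}`
of the paper, `i = 1, …, N`, is `splitCh n W ⟨i-1, _⟩` here.) -/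
noncomputable def splitCh {Y : Type*} [Fintype Y] (n : ℕ) (W : ZMod 2 → Y → ℝ)
    (i : Fin (2 ^ n)) (b : ZMod 2) (o : (Fin (2 ^ n) → Y) × (Fin i.val → ZMod 2)) : ℝ :=
  ∑ u : Fin (2 ^ n) → ZMod 2,
    if (∀ j : Fin i.val, u ⟨j.val, j.isLt.trans i.isLt⟩ = o.2 j) ∧ u i = b then
      (2 : ℝ) ^ (-((2 ^ n : ℤ) - 1)) * combinedCh n W u o.1
    else 0

/-- Arıkan's successive cancellation (SC) decoder: given the frozen set `F`, frozen
values `uf` (only its values on `F` matter), and the channel output `y`, it outputs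
`û_i = uf_i` for `i ∈ F`, and for `i ∉ F` it outputs `0` if
`W_N^{(i)}(y, û₁^{i-1} | 0) ≥ W_N^{(i)}(y, û₁^{i-1} | 1)` and `1` otherwise. -/
noncomputable def scDecode {Y : Type*} [Fintype Y] (n : ℕ) (W : ZMod 2 → Y → ℝ)
    (F : Finset (Fin (2 ^ n))) (uf : Fin (2 ^ n) → ZMod 2) (y : Fin (2 ^ n) → Y)
    (i : Fin (2 ^ n)) : ZMod 2 :=
  if i ∈ F then uf i
  else if splitCh n W i 1
          (y, fun j : Fin i.val => scDecode n W F uf y ⟨j.val, j.isLt.trans i.isLt⟩) ≤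
        splitCh n W i 0
          (y, fun j : Fin i.val => scDecode n W F uf y ⟨j.val, j.isLt.trans i.isLt⟩)
    then 0 else 1
termination_by i.val
decreasing_by all_goals exact j.isLt


section AuxPolar

variable {Y : Type*} [Fintype Y]

private lemma zmod2_cases (x : ZMod 2) : x = 0 ∨ x = 1 := by revert x; decide

private lemma combinedCh_nonneg (n : ℕ) (W : ZMod 2 → Y → ℝ) (hW : ∀ x y, 0 ≤ W x y)
    (u : Fin (2 ^ n) → ZMod 2) (y : Fin (2 ^ n) → Y) : 0 ≤ combinedCh n W u y :=
  Finset.prod_nonneg fun _ _ => hW _ _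

private lemma splitCh_nonneg (n : ℕ) (W : ZMod 2 → Y → ℝ) (hW : ∀ x y, 0 ≤ W x y)
    (i : Fin (2 ^ n)) (b : ZMod 2) (o : (Fin (2 ^ n) → Y) × (Fin i.val → ZMod 2)) :
    0 ≤ splitCh n W i b o := by
  refine Finset.sum_nonneg fun u _ => ?_
  split_ifs
  · exact mul_nonneg (by positivity) (combinedCh_nonneg n W hW u o.1)
  · exact le_refl 0

private lemma pow_const_eq (n : ℕ) :
    ((2 : ℝ) ^ (2 ^ n : ℕ))⁻¹ = (1 / 2) * (2 : ℝ) ^ (-((2 ^ n : ℤ) - 1)) := by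
  rw [← zpow_natCast (2 : ℝ), ← zpow_neg,
    show (1 / 2 : ℝ) = (2 : ℝ) ^ (-1 : ℤ) by norm_num,
    ← zpow_add₀ (by norm_num : (2 : ℝ) ≠ 0)]
  congr 1
  push_cast
  ring

private lemma exists_bad_index (n : ℕ) (W : ZMod 2 → Y → ℝ) (F : Finset (Fin (2 ^ n)))
    (u : Fin (2 ^ n) → ZMod 2) (y : Fin (2 ^ n) → Y)
    (h : ∃ i ∈ Fᶜ, scDecode n W F u y i ≠ u i) :
    ∃ i ∈ Fᶜ,
      splitCh n W i (u i) (y, fun j : Fin i.val => u ⟨j.val, j.isLt.trans i.isLt⟩) ≤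
        splitCh n W i (u i + 1) (y, fun j : Fin i.val => u ⟨j.val, j.isLt.trans i.isLt⟩) := by
  classical
  set S : Finset (Fin (2 ^ n)) := Finset.univ.filter (fun i => scDecode n W F u y i ≠ u i)
    with hS
  have hne : S.Nonempty := by
    obtain ⟨i, _, hi⟩ := h
    exact ⟨i, by simp [hS, hi]⟩
  set i0 := S.min' hne with hi0def
  have hi0S : i0 ∈ S := S.min'_mem hne
  have hi0err : scDecode n W F u y i0 ≠ u i0 := by simpa [hS] using hi0S
  have hi0F : i0 ∉ F := by
    intro hF
    apply hi0err
    rw [scDecode, if_pos hF]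
  have hpre : ∀ j : Fin i0.val,
      scDecode n W F u y ⟨j.val, j.isLt.trans i0.isLt⟩ = u ⟨j.val, j.isLt.trans i0.isLt⟩ := by
    intro j
    by_contra hj
    have hmem : (⟨j.val, j.isLt.trans i0.isLt⟩ : Fin (2 ^ n)) ∈ S := by simp [hS, hj]
    have hle := S.min'_le _ hmem
    rw [← hi0def, Fin.le_def] at hle
    have := j.isLt
    simp at hle
    omega
  have hfun : (fun j : Fin i0.val => scDecode n W F u y ⟨j.val, j.isLt.trans i0.isLt⟩)
      = fun j : Fin i0.val => u ⟨j.val, j.isLt.trans i0.isLt⟩ := funext hpre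
  have hdec : scDecode n W F u y i0 =
      if splitCh n W i0 1 (y, fun j : Fin i0.val => u ⟨j.val, j.isLt.trans i0.isLt⟩) ≤
          splitCh n W i0 0 (y, fun j : Fin i0.val => u ⟨j.val, j.isLt.trans i0.isLt⟩)
        then 0 else 1 := by
    rw [scDecode, if_neg hi0F, hfun]
  refine ⟨i0, by simpa using hi0F, ?_⟩
  rcases zmod2_cases (u i0) with h0 | h1
  · rw [h0] at hi0err ⊢
    rw [show ((0 : ZMod 2) + 1) = 1 from by decide]
    by_contra hc
    apply hi0err
    rw [hdec, if_pos (le_of_not_ge hc)]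
  · rw [h1] at hi0err ⊢
    rw [show ((1 : ZMod 2) + 1) = 0 from by decide]
    by_contra hc
    apply hi0err
    rw [hdec, if_neg (fun hle => hc hle)]

private lemma ite_sum_push {α : Type*} [Fintype α] (c : Prop) [Decidable c] (f : α → ℝ) :
    (if c then ∑ a, f a else 0) = ∑ a, if c then f a else 0 := by
  split_ifs <;> simp

private lemma splitCh_sum_eq (n : ℕ) (W : ZMod 2 → Y → ℝ) (i : Fin (2 ^ n)) :
    (∑ o : (Fin (2 ^ n) → Y) × (Fin i.val → ZMod 2), ∑ b : ZMod 2,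
        if splitCh n W i b o ≤ splitCh n W i (b + 1) o then (1 / 2) * splitCh n W i b o else 0)
      = ∑ u : Fin (2 ^ n) → ZMod 2, ∑ y : Fin (2 ^ n) → Y,
          if splitCh n W i (u i) (y, fun j : Fin i.val => u ⟨j.val, j.isLt.trans i.isLt⟩) ≤
              splitCh n W i (u i + 1)
                (y, fun j : Fin i.val => u ⟨j.val, j.isLt.trans i.isLt⟩) then
            ((2 : ℝ) ^ (2 ^ n : ℕ))⁻¹ * combinedCh n W u y
          else 0 := by
  classical
  have h1 : ∀ (o : (Fin (2 ^ n) → Y) × (Fin i.val → ZMod 2)) (b : ZMod 2),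
      (if splitCh n W i b o ≤ splitCh n W i (b + 1) o then (1 / 2) * splitCh n W i b o else 0)
        = ∑ u : Fin (2 ^ n) → ZMod 2,
            if (∀ j : Fin i.val, u ⟨j.val, j.isLt.trans i.isLt⟩ = o.2 j) ∧ u i = b then
              (if splitCh n W i b o ≤ splitCh n W i (b + 1) o then
                ((2 : ℝ) ^ (2 ^ n : ℕ))⁻¹ * combinedCh n W u o.1 else 0)
            else 0 := by
    intro o b
    by_cases hc : splitCh n W i b o ≤ splitCh n W i (b + 1) o
    · rw [if_pos hc]
      conv_lhs => rw [splitCh, Finset.mul_sum]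
      refine Finset.sum_congr rfl fun u _ => ?_
      split_ifs
      · rw [← mul_assoc, ← pow_const_eq]
      · ring
    · rw [if_neg hc]
      symm
      refine Finset.sum_eq_zero fun u _ => ?_
      split_ifs <;> rfl
  calc (∑ o : (Fin (2 ^ n) → Y) × (Fin i.val → ZMod 2), ∑ b : ZMod 2,
        if splitCh n W i b o ≤ splitCh n W i (b + 1) o then (1 / 2) * splitCh n W i b o else 0)
      = ∑ o : (Fin (2 ^ n) → Y) × (Fin i.val → ZMod 2), ∑ b : ZMod 2,
          ∑ u : Fin (2 ^ n) → ZMod 2,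
            if (∀ j : Fin i.val, u ⟨j.val, j.isLt.trans i.isLt⟩ = o.2 j) ∧ u i = b then
              (if splitCh n W i b o ≤ splitCh n W i (b + 1) o then
                ((2 : ℝ) ^ (2 ^ n : ℕ))⁻¹ * combinedCh n W u o.1 else 0)
            else 0 := by
        exact Finset.sum_congr rfl fun o _ => Finset.sum_congr rfl fun b _ => h1 o b
    _ = ∑ o : (Fin (2 ^ n) → Y) × (Fin i.val → ZMod 2),
          ∑ u : Fin (2 ^ n) → ZMod 2, ∑ b : ZMod 2,
            if (∀ j : Fin i.val, u ⟨j.val, j.isLt.trans i.isLt⟩ = o.2 j) ∧ u i = b then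
              (if splitCh n W i b o ≤ splitCh n W i (b + 1) o then
                ((2 : ℝ) ^ (2 ^ n : ℕ))⁻¹ * combinedCh n W u o.1 else 0)
            else 0 :=
        Finset.sum_congr rfl fun o _ => Finset.sum_comm
    _ = ∑ u : Fin (2 ^ n) → ZMod 2,
          ∑ o : (Fin (2 ^ n) → Y) × (Fin i.val → ZMod 2), ∑ b : ZMod 2,
            if (∀ j : Fin i.val, u ⟨j.val, j.isLt.trans i.isLt⟩ = o.2 j) ∧ u i = b then
              (if splitCh n W i b o ≤ splitCh n W i (b + 1) o then
                ((2 : ℝ) ^ (2 ^ n : ℕ))⁻¹ * combinedCh n W u o.1 else 0)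
            else 0 :=
        Finset.sum_comm
    _ = _ := by
        refine Finset.sum_congr rfl fun u _ => ?_
        rw [Fintype.sum_prod_type]
        refine Finset.sum_congr rfl fun y _ => ?_
        have hcond : ∀ (p : Fin i.val → ZMod 2) (b : ZMod 2),
            ((∀ j : Fin i.val, u ⟨j.val, j.isLt.trans i.isLt⟩ = p j) ∧ u i = b)
              ↔ (b = u i ∧ p = fun j : Fin i.val => u ⟨j.val, j.isLt.trans i.isLt⟩) := by
          intro p b
          constructor
          · rintro ⟨hp, hb⟩
            exact ⟨hb.symm, funext fun j => (hp j).symm⟩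
          · rintro ⟨hb, hp⟩
            exact ⟨fun j => by rw [hp], hb.symm⟩
        simp only [hcond, ite_and, Finset.sum_ite_eq', Finset.mem_univ, if_true]

private lemma sum_zmod2 (f : ZMod 2 → ℝ) : ∑ b : ZMod 2, f b = f 0 + f 1 := by
  rw [show (Finset.univ : Finset (ZMod 2)) = {0, 1} from by decide,
    Finset.sum_pair (by decide : (0 : ZMod 2) ≠ 1)]

private lemma le_sqrt_mul {a b : ℝ} (ha : 0 ≤ a) (hab : a ≤ b) : a ≤ Real.sqrt (a * b) := by
  calc a = Real.sqrt (a * a) := (Real.sqrt_mul_self ha).symm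
  _ ≤ _ := Real.sqrt_le_sqrt (by nlinarith)

private lemma stepD (n : ℕ) (W : ZMod 2 → Y → ℝ) (hW : ∀ x y, 0 ≤ W x y) (i : Fin (2 ^ n)) :
    (∑ o : (Fin (2 ^ n) → Y) × (Fin i.val → ZMod 2), ∑ b : ZMod 2,
        if splitCh n W i b o ≤ splitCh n W i (b + 1) o then (1 / 2) * splitCh n W i b o else 0)
      ≤ bhatt (splitCh n W i) := by
  refine Finset.sum_le_sum fun o _ => ?_
  rw [sum_zmod2, show ((0 : ZMod 2) + 1) = 1 from by decide,
    show ((1 : ZMod 2) + 1) = 0 from by decide]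
  have h0 := splitCh_nonneg n W hW i 0 o
  have h1 := splitCh_nonneg n W hW i 1 o
  have hs := Real.sqrt_nonneg (splitCh n W i 0 o * splitCh n W i 1 o)
  split_ifs with hc0 hc1 hc1
  · have k0 := le_sqrt_mul h0 hc0
    have k1 := le_sqrt_mul h1 hc1
    rw [mul_comm] at k1
    linarith
  · have k0 := le_sqrt_mul h0 hc0
    linarith
  · have k1 := le_sqrt_mul h1 hc1
    rw [mul_comm] at k1
    linarith
  · linarith

end AuxPolar

/-- The block error probability of the SC decoder—with the input vector `U₁^N`
uniformly distributed on `{0,1}^N` (equivalently, uniformly random frozen vector and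
uniformly random message bits) and `Y₁^N` generated through the combined channel
`W_N`—satisfies `P(Û_𝒜 ≠ U_𝒜) ≤ Σ_{i ∈ 𝒜} Z(W_N^{(i)})`, where `𝒜 = Fᶜ`. -/
theorem sc_block_error_le_sum_bhatt {Y : Type*} [Fintype Y] (n : ℕ)
    (W : ZMod 2 → Y → ℝ) (hW : IsBDMC W) (F : Finset (Fin (2 ^ n))) :
    (∑ u : Fin (2 ^ n) → ZMod 2, ∑ y : Fin (2 ^ n) → Y,
        if ∃ i ∈ Fᶜ, scDecode n W F u y i ≠ u i then
          ((2 : ℝ) ^ (2 ^ n : ℕ))⁻¹ * combinedCh n W u y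
        else 0) ≤
      ∑ i ∈ Fᶜ, bhatt (splitCh n W i) := by
  classical
  obtain ⟨hWnn, -⟩ := hW
  have hP : ∀ (u : Fin (2 ^ n) → ZMod 2) (y : Fin (2 ^ n) → Y),
      0 ≤ ((2 : ℝ) ^ (2 ^ n : ℕ))⁻¹ * combinedCh n W u y := fun u y =>
    mul_nonneg (by positivity) (combinedCh_nonneg n W hWnn u y)
  calc (∑ u : Fin (2 ^ n) → ZMod 2, ∑ y : Fin (2 ^ n) → Y,
        if ∃ i ∈ Fᶜ, scDecode n W F u y i ≠ u i then
          ((2 : ℝ) ^ (2 ^ n : ℕ))⁻¹ * combinedCh n W u y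
        else 0)
      ≤ ∑ u : Fin (2 ^ n) → ZMod 2, ∑ y : Fin (2 ^ n) → Y, ∑ i ∈ Fᶜ,
          if splitCh n W i (u i) (y, fun j : Fin i.val => u ⟨j.val, j.isLt.trans i.isLt⟩) ≤
              splitCh n W i (u i + 1)
                (y, fun j : Fin i.val => u ⟨j.val, j.isLt.trans i.isLt⟩) then
            ((2 : ℝ) ^ (2 ^ n : ℕ))⁻¹ * combinedCh n W u y
          else 0 := by
        refine Finset.sum_le_sum fun u _ => Finset.sum_le_sum fun y _ => ?_
        split_ifs with h
        · obtain ⟨i0, hi0, hE⟩ := exists_bad_index n W F u y h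
          calc ((2 : ℝ) ^ (2 ^ n : ℕ))⁻¹ * combinedCh n W u y
              = if splitCh n W i0 (u i0)
                    (y, fun j : Fin i0.val => u ⟨j.val, j.isLt.trans i0.isLt⟩) ≤
                  splitCh n W i0 (u i0 + 1)
                    (y, fun j : Fin i0.val => u ⟨j.val, j.isLt.trans i0.isLt⟩) then
                  ((2 : ℝ) ^ (2 ^ n : ℕ))⁻¹ * combinedCh n W u y
                else 0 := (if_pos hE).symm
          _ ≤ _ := by
                refine Finset.single_le_sum
                  (f := fun i => if splitCh n W i (u i)
                        (y, fun j : Fin i.val => u ⟨j.val, j.isLt.trans i.isLt⟩) ≤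
                      splitCh n W i (u i + 1)
                        (y, fun j : Fin i.val => u ⟨j.val, j.isLt.trans i.isLt⟩) then
                      ((2 : ℝ) ^ (2 ^ n : ℕ))⁻¹ * combinedCh n W u y
                    else 0)
                  (fun i _ => ?_) hi0
                beta_reduce
                split_ifs
                exacts [hP u y, le_refl 0]
        · exact Finset.sum_nonneg fun i _ => by split_ifs; exacts [hP u y, le_refl 0]
    _ = ∑ i ∈ Fᶜ, ∑ u : Fin (2 ^ n) → ZMod 2, ∑ y : Fin (2 ^ n) → Y,
          if splitCh n W i (u i) (y, fun j : Fin i.val => u ⟨j.val, j.isLt.trans i.isLt⟩) ≤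
              splitCh n W i (u i + 1)
                (y, fun j : Fin i.val => u ⟨j.val, j.isLt.trans i.isLt⟩) then
            ((2 : ℝ) ^ (2 ^ n : ℕ))⁻¹ * combinedCh n W u y
          else 0 :=
      (Finset.sum_congr rfl fun u _ => Finset.sum_comm).trans Finset.sum_comm
    _ = ∑ i ∈ Fᶜ, ∑ o : (Fin (2 ^ n) → Y) × (Fin i.val → ZMod 2), ∑ b : ZMod 2,
          if splitCh n W i b o ≤ splitCh n W i (b + 1) o then (1 / 2) * splitCh n W i b o
          else 0 :=
      Finset.sum_congr rfl fun i _ => (splitCh_sum_eq n W i).symm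
    _ ≤ ∑ i ∈ Fᶜ, bhatt (splitCh n W i) :=
      Finset.sum_le_sum fun i _ => stepD n W hWnn i
end

section
/- Let W : {0,1} → 𝒴 and W' : {0,1} → 𝒴' be two B-DMCs such that W is degraded with respect to W'. Then for every N = 2^n and every i ∈ {1,…,N}, the split channel W_N^{(i)} is degraded with respect to W'_N^{(i)}, and Z(W_N^{(i)}) ≥ Z(W'_N^{(i)}). -/
open scoped BigOperators

/-- `W` is degraded with respect to `W'` if `W` is obtained by composing `W'` with a
further channel `W''`: `W(y|x) = Σ_{y'} W'(y'|x)·W''(y|y')`. -/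
def DegradedWrt {X Y Y' : Type*} [Fintype Y] [Fintype Y']
    (W : X → Y → ℝ) (W' : X → Y' → ℝ) : Prop :=
  ∃ Wd : Y' → Y → ℝ, (∀ y' y, 0 ≤ Wd y' y) ∧ (∀ y', ∑ y, Wd y' y = 1) ∧
    ∀ x y, W x y = ∑ y', W' x y' * Wd y' y

section Aux

open Finset

/-- If `V` is degraded w.r.t. `V'` and `V'` is nonnegative, then `Z(V') ≤ Z(V)`. -/
lemma bhatt_le_of_degradedAux {Y Y' : Type*} [Fintype Y] [Fintype Y']
    (V : ZMod 2 → Y → ℝ) (V' : ZMod 2 → Y' → ℝ)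
    (hV' : ∀ x y, 0 ≤ V' x y) (h : DegradedWrt V V') : bhatt V' ≤ bhatt V := by
  obtain ⟨Wd, hWd0, hWd1, hEq⟩ := h
  unfold bhatt
  have key : ∀ y : Y, ∑ y', Real.sqrt (V' 0 y' * V' 1 y') * Wd y' y
      ≤ Real.sqrt (V 0 y * V 1 y) := by
    intro y
    have h1 : ∀ y', Real.sqrt (V' 0 y' * V' 1 y') * Wd y' y
        = Real.sqrt (V' 0 y' * Wd y' y) * Real.sqrt (V' 1 y' * Wd y' y) := by
      intro y'
      rw [← Real.sqrt_mul (mul_nonneg (hV' 0 y') (hWd0 y' y))]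
      rw [show V' 0 y' * Wd y' y * (V' 1 y' * Wd y' y)
          = V' 0 y' * V' 1 y' * (Wd y' y * Wd y' y) by ring]
      rw [Real.sqrt_mul (mul_nonneg (hV' 0 y') (hV' 1 y')),
        Real.sqrt_mul_self (hWd0 y' y)]
    calc ∑ y', Real.sqrt (V' 0 y' * V' 1 y') * Wd y' y
        = ∑ y', Real.sqrt (V' 0 y' * Wd y' y) * Real.sqrt (V' 1 y' * Wd y' y) := by
          exact Finset.sum_congr rfl fun y' _ => h1 y'
      _ ≤ Real.sqrt (∑ y', V' 0 y' * Wd y' y) * Real.sqrt (∑ y', V' 1 y' * Wd y' y) :=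
          Real.sum_sqrt_mul_sqrt_le _ (fun y' => mul_nonneg (hV' 0 y') (hWd0 y' y))
            (fun y' => mul_nonneg (hV' 1 y') (hWd0 y' y))
      _ = Real.sqrt (V 0 y * V 1 y) := by
          rw [← hEq 0 y, ← hEq 1 y,
            ← Real.sqrt_mul (by rw [hEq 0 y]; exact Finset.sum_nonneg fun y' _ => mul_nonneg (hV' 0 y') (hWd0 y' y))]
  calc ∑ y', Real.sqrt (V' 0 y' * V' 1 y')
      = ∑ y', ∑ y, Real.sqrt (V' 0 y' * V' 1 y') * Wd y' y := by
        refine Finset.sum_congr rfl fun y' _ => ?_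
        rw [← Finset.mul_sum, hWd1 y', mul_one]
    _ = ∑ y, ∑ y', Real.sqrt (V' 0 y' * V' 1 y') * Wd y' y := Finset.sum_comm
    _ ≤ ∑ y, Real.sqrt (V 0 y * V 1 y) := Finset.sum_le_sum fun y _ => key y

lemma splitCh_eqAux {Y Y' : Type*} [Fintype Y] [Fintype Y'] (n : ℕ) (i : Fin (2 ^ n))
    (W : ZMod 2 → Y → ℝ) (W' : ZMod 2 → Y' → ℝ) (Wd : Y' → Y → ℝ)
    (hEq : ∀ x y, W x y = ∑ y', W' x y' * Wd y' y)
    (b : ZMod 2) (o : (Fin (2 ^ n) → Y) × (Fin i.val → ZMod 2)) :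
    splitCh n W i b o
      = ∑ p : Fin (2 ^ n) → Y',
          splitCh n W' i b (p, o.2) * ∏ j, Wd (p j) (o.1 j) := by
  have hprod : ∀ u : Fin (2 ^ n) → ZMod 2,
      combinedCh n W u o.1 = ∑ p : Fin (2 ^ n) → Y',
        combinedCh n W' u p * ∏ j, Wd (p j) (o.1 j) := by
    intro u
    unfold combinedCh
    calc ∏ j, W (polarEnc n u j) (o.1 j)
        = ∏ j, ∑ t, W' (polarEnc n u j) t * Wd t (o.1 j) := by
          exact Finset.prod_congr rfl fun j _ => hEq _ _
      _ = ∑ p ∈ Fintype.piFinset (fun _ : Fin (2 ^ n) => (univ : Finset Y')),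
            ∏ j, W' (polarEnc n u j) (p j) * Wd (p j) (o.1 j) :=
          Finset.prod_univ_sum _ _
      _ = ∑ p : Fin (2 ^ n) → Y',
            (∏ j, W' (polarEnc n u j) (p j)) * ∏ j, Wd (p j) (o.1 j) := by
          rw [Fintype.piFinset_univ]
          exact Finset.sum_congr rfl fun p _ => Finset.prod_mul_distrib
  unfold splitCh
  calc (∑ u : Fin (2 ^ n) → ZMod 2,
        if (∀ j : Fin i.val, u ⟨j.val, j.isLt.trans i.isLt⟩ = o.2 j) ∧ u i = b then
          (2 : ℝ) ^ (-((2 ^ n : ℤ) - 1)) * combinedCh n W u o.1 else 0)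
      = ∑ u : Fin (2 ^ n) → ZMod 2, ∑ p : Fin (2 ^ n) → Y',
          (if (∀ j : Fin i.val, u ⟨j.val, j.isLt.trans i.isLt⟩ = o.2 j) ∧ u i = b then
            (2 : ℝ) ^ (-((2 ^ n : ℤ) - 1)) * combinedCh n W' u p else 0)
            * ∏ j, Wd (p j) (o.1 j) := by
        refine Finset.sum_congr rfl fun u _ => ?_
        split_ifs with h
        · rw [hprod u, Finset.mul_sum]
          exact Finset.sum_congr rfl fun p _ => by ring
        · simp
    _ = ∑ p : Fin (2 ^ n) → Y',
          (∑ u : Fin (2 ^ n) → ZMod 2,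
            if (∀ j : Fin i.val, u ⟨j.val, j.isLt.trans i.isLt⟩ = o.2 j) ∧ u i = b then
              (2 : ℝ) ^ (-((2 ^ n : ℤ) - 1)) * combinedCh n W' u p else 0)
            * ∏ j, Wd (p j) (o.1 j) := by
        rw [Finset.sum_comm]
        exact Finset.sum_congr rfl fun p _ => (Finset.sum_mul _ _ _).symm
    _ = _ := rfl

end Aux

/-- (Lemma 4.7 of Korada) If the B-DMC `W` is degraded w.r.t. the B-DMC `W'`, then for
every `N = 2^n` and every index `i`, the split channel `W_N^{(i)}` is degraded w.r.t.
`W'_N^{(i)}`, and `Z(W_N^{(i)}) ≥ Z(W'_N^{(i)})`. -/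
theorem split_degraded_and_bhatt_ge {Y Y' : Type*} [Fintype Y] [Fintype Y']
    (W : ZMod 2 → Y → ℝ) (W' : ZMod 2 → Y' → ℝ)
    (hW : IsBDMC W) (hW' : IsBDMC W') (hdeg : DegradedWrt W W')
    (n : ℕ) (i : Fin (2 ^ n)) :
    DegradedWrt (splitCh n W i) (splitCh n W' i) ∧
    bhatt (splitCh n W' i) ≤ bhatt (splitCh n W i) := by
  obtain ⟨Wd, hWd0, hWd1, hEq⟩ := hdeg
  have hsplit : ∀ b o, splitCh n W i b o
      = ∑ p : Fin (2 ^ n) → Y', splitCh n W' i b (p, o.2) * ∏ j, Wd (p j) (o.1 j) :=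
    fun b o => splitCh_eqAux n i W W' Wd hEq b o
  have hdegN : DegradedWrt (splitCh n W i) (splitCh n W' i) := by
    refine ⟨fun o' o => (∏ j, Wd (o'.1 j) (o.1 j)) * (if o'.2 = o.2 then 1 else 0),
      ?_, ?_, ?_⟩
    · intro o' o
      have : (0:ℝ) ≤ ∏ j, Wd (o'.1 j) (o.1 j) :=
        Finset.prod_nonneg fun j _ => hWd0 _ _
      dsimp only
      split_ifs <;> simp [this]
    · intro o'
      rw [Fintype.sum_prod_type]
      have h1 : ∀ y : Fin (2 ^ n) → Y,
          ∑ v : Fin i.val → ZMod 2,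
            (∏ j, Wd (o'.1 j) (y j)) * (if o'.2 = v then 1 else 0)
          = ∏ j, Wd (o'.1 j) (y j) := by
        intro y
        rw [← Finset.mul_sum]
        simp
      rw [Finset.sum_congr rfl fun y _ => h1 y]
      calc ∑ y : Fin (2 ^ n) → Y, ∏ j, Wd (o'.1 j) (y j)
          = ∑ y ∈ Fintype.piFinset (fun _ : Fin (2 ^ n) => (Finset.univ : Finset Y)),
              ∏ j, Wd (o'.1 j) (y j) := by rw [Fintype.piFinset_univ]
        _ = ∏ j, ∑ t, Wd (o'.1 j) t := (Finset.prod_univ_sum _ _).symm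
        _ = 1 := by simp [hWd1]
    · intro b o
      rw [hsplit b o, Fintype.sum_prod_type]
      refine Finset.sum_congr rfl fun p _ => ?_
      rw [show ∑ v : Fin i.val → ZMod 2, splitCh n W' i b (p, v) *
          ((∏ j, Wd (p j) (o.1 j)) * (if v = o.2 then 1 else 0))
        = ∑ v : Fin i.val → ZMod 2, (if v = o.2 then
            splitCh n W' i b (p, v) * ∏ j, Wd (p j) (o.1 j) else 0) from
        Finset.sum_congr rfl fun v _ => by split_ifs <;> simp <;> ring]
      simp
  refine ⟨hdegN, ?_⟩
  apply bhatt_le_of_degradedAux _ _ ?_ hdegN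
  intro b o
  unfold splitCh
  refine Finset.sum_nonneg fun u _ => ?_
  split_ifs with h
  · refine mul_nonneg (by positivity) ?_
    exact Finset.prod_nonneg fun j _ => hW'.1 _ _
  · exact le_refl 0
end
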